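/- Non-overlapping peak construction: let T: ℝ → ℝ≥0 be a function, let 0 < ω̲ < ω̄, and suppose T(ω) ≤ 1+ε for ω̲ < |ω| < ω̄ and T(ω) ≤ 1 otherwise. Define γ_k = (ω̄/ω̲)^{k-1}·γ₁ for some γ₁ > 0, and Tₖ(ω) = T(γₖ ω). Then for every n ∈ ℕ and every ω ∈ ℝ, the product Π_{k=1}^n Tₖ(ω) ≤ 1+ε, because for each ω at most one factor exceeds 1 (the intervals (ω̲/γₖ, ω̄/γₖ) are pairwise disjoint since ω̄/γ_{k+1} = ω̲/γₖ). -/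
import Mathlib


open Finset

theorem non_overlapping_peaks (T : ℝ → ℝ) (hT : ∀ ω, 0 ≤ T ω)
    (ε ωlo ωhi γ₁ : ℝ) (hε : 0 < ε) (hlo : 0 < ωlo) (hlohi : ωlo < ωhi) (hγ₁ : 0 < γ₁)
    (hpeak : ∀ ω : ℝ, ωlo < |ω| → |ω| < ωhi → T ω ≤ 1 + ε)
    (hflat : ∀ ω : ℝ, ¬(ωlo < |ω| ∧ |ω| < ωhi) → T ω ≤ 1) :
    ∀ n : ℕ, ∀ ω : ℝ,
      ∏ k ∈ Finset.Icc 1 n, T ((ωhi / ωlo) ^ (k - 1) * γ₁ * ω) ≤ 1 + ε := by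
  intro n ω
  set r := ωhi / ωlo with hrdef
  have hr1 : 1 < r := (one_lt_div hlo).2 hlohi
  have hr0 : 0 < r := lt_trans one_pos hr1
  have hrmul : r * ωlo = ωhi := div_mul_cancel₀ _ (ne_of_gt hlo)
  -- key disjointness
  have key : ∀ k j : ℕ, 1 ≤ k → k < j →
      ωlo < |r ^ (k - 1) * γ₁ * ω| → |r ^ (j - 1) * γ₁ * ω| < ωhi → False := by
    intro k j hk hkj h1 h2
    have hsplit : r ^ (j - 1) = r ^ (j - k) * r ^ (k - 1) := by
      rw [← pow_add]
      congr 1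
      omega
    have habs : |r ^ (j - 1) * γ₁ * ω| = r ^ (j - k) * |r ^ (k - 1) * γ₁ * ω| := by
      rw [hsplit, mul_assoc, mul_assoc, abs_mul, abs_of_pos (pow_pos hr0 _), ← mul_assoc]
    have hjk : 1 ≤ j - k := by omega
    have hge : r ≤ r ^ (j - k) := by
      calc r = r ^ 1 := (pow_one r).symm
      _ ≤ r ^ (j - k) := pow_le_pow_right₀ (le_of_lt hr1) hjk
    have hpos : (0:ℝ) ≤ |r ^ (k - 1) * γ₁ * ω| := abs_nonneg _
    nlinarith [habs]
  by_cases h : ∃ k ∈ Finset.Icc 1 n,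
      ωlo < |r ^ (k - 1) * γ₁ * ω| ∧ |r ^ (k - 1) * γ₁ * ω| < ωhi
  · obtain ⟨k₀, hk₀, hp1, hp2⟩ := h
    have hrest : ∏ k ∈ (Finset.Icc 1 n).erase k₀, T (r ^ (k - 1) * γ₁ * ω) ≤ 1 := by
      apply Finset.prod_le_one (fun i _ => hT _)
      intro i hi
      apply hflat
      rintro ⟨q1, q2⟩
      have hine : i ≠ k₀ := (Finset.mem_erase.mp hi).1
      have himem := (Finset.mem_erase.mp hi).2
      have hi1 : 1 ≤ i := (Finset.mem_Icc.mp himem).1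
      have hk01 : 1 ≤ k₀ := (Finset.mem_Icc.mp hk₀).1
      rcases lt_or_gt_of_ne hine with hlt | hgt
      · exact key i k₀ hi1 hlt q1 hp2
      · exact key k₀ i hk01 hgt hp1 q2
    calc ∏ k ∈ Finset.Icc 1 n, T (r ^ (k - 1) * γ₁ * ω)
        = T (r ^ (k₀ - 1) * γ₁ * ω) *
          ∏ k ∈ (Finset.Icc 1 n).erase k₀, T (r ^ (k - 1) * γ₁ * ω) :=
          (Finset.mul_prod_erase _ _ hk₀).symm
      _ ≤ (1 + ε) * 1 := mul_le_mul (hpeak _ hp1 hp2) hrest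
          (Finset.prod_nonneg fun i _ => hT _) (by linarith)
      _ = 1 + ε := mul_one _
  · push_neg at h
    calc ∏ k ∈ Finset.Icc 1 n, T (r ^ (k - 1) * γ₁ * ω) ≤ 1 := by
          apply Finset.prod_le_one (fun i _ => hT _)
          intro i hi
          apply hflat
          rintro ⟨q1, q2⟩
          exact absurd q2 (not_lt.2 (h i hi q1))
      _ ≤ 1 + ε := by linarith
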